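/- Let N ≥ 4 be an integer divisible by 4 and define h(n) = −1 + 12n(N − 2n)/(N² − 4) for integers n. Then for every integer n with 0 ≤ n ≤ N/2, one has ∑_{s=1}^{N/4−1} [h(n) + cos(4πns/N)] / sin²(2πs/N) + (1/2)[h(n) + cos(πn)] = 0. -/

import Mathlib

open Finset

/-- `h(n) = −1 + 12n(N − 2n)/(N² − 4)` -/
noncomputable def hCoef (N : ℕ) (n : ℕ) : ℝ :=
  -1 + 12 * (n : ℝ) * ((N : ℝ) - 2 * n) / ((N : ℝ) ^ 2 - 4)

noncomputable def zt (M : ℕ) : ℂ := Complex.exp (2 * Real.pi * Complex.I / M)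

lemma two_pi_I_ne : (2 * Real.pi * Complex.I : ℂ) ≠ 0 := by
  simp [Complex.ext_iff, Real.pi_ne_zero]

lemma zt_zpow (M : ℕ) (t : ℤ) : zt M ^ t = Complex.exp (2 * Real.pi * Complex.I * t / M) := by
  rw [zt, ← Complex.exp_int_mul]
  ring_nf

lemma zt_pow_eq_one_iff (M : ℕ) (hM : 0 < M) (t : ℤ) :
    zt M ^ t = 1 ↔ (M : ℤ) ∣ t := by
  have hM' : (M : ℂ) ≠ 0 := by exact_mod_cast hM.ne'
  rw [zt_zpow, Complex.exp_eq_one_iff]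
  constructor
  · rintro ⟨n, hn⟩
    refine ⟨n, ?_⟩
    have h2 : (2 * Real.pi * Complex.I) * ((t : ℂ) / M) = (2 * Real.pi * Complex.I) * n := by
      linear_combination hn
    have h3 : (t : ℂ) / M = n := mul_left_cancel₀ two_pi_I_ne h2
    have h4 : (t : ℂ) = M * n := by
      field_simp at h3; linear_combination h3
    exact_mod_cast h4
  · rintro ⟨n, rfl⟩
    refine ⟨n, ?_⟩
    field_simp
    push_cast; ring

lemma zt_pow_M (M : ℕ) (hM : 0 < M) (t : ℤ) : (zt M ^ t) ^ M = 1 := by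
  rw [← zpow_natCast, ← zpow_mul, zt_pow_eq_one_iff M hM]
  exact ⟨t, by ring⟩

lemma orth (M : ℕ) (hM : 0 < M) (t : ℤ) :
    ∑ k ∈ range M, zt M ^ (t * k) = if (M : ℤ) ∣ t then (M : ℂ) else 0 := by
  by_cases h : (M : ℤ) ∣ t
  · simp only [h, if_true]
    have : ∀ k ∈ range M, zt M ^ (t * k) = 1 := by
      intro k _
      rw [zt_pow_eq_one_iff M hM]
      exact Dvd.dvd.mul_right h k
    rw [Finset.sum_congr rfl this]
    simp
  · simp only [h, if_false]
    have hz : zt M ^ t ≠ 1 := fun hc => h ((zt_pow_eq_one_iff M hM t).mp hc)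
    have : ∀ k ∈ range M, zt M ^ (t * k) = (zt M ^ t) ^ k := by
      intro k _
      rw [← zpow_natCast, ← zpow_mul]
    rw [Finset.sum_congr rfl this, geom_sum_eq hz, zt_pow_M M hM t]
    simp

lemma geom_deriv_aux (z : ℂ) (M : ℕ) :
    (z - 1) * ∑ j ∈ range M, (j : ℂ) * z ^ j
      = (M - 1) * z ^ M - (∑ j ∈ range M, z ^ j) + 1 := by
  induction M with
  | zero => simp
  | succ m ih =>
    rw [Finset.sum_range_succ, Finset.sum_range_succ (f := fun j => z ^ j)]
    push_cast
    ring_nf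
    ring_nf at ih
    linear_combination ih

lemma geom_deriv (z : ℂ) (M : ℕ) (h1 : z ^ M = 1) (hz : z ≠ 1) :
    (z - 1) * ∑ j ∈ range M, (j : ℂ) * z ^ j = M := by
  have hg : ∑ j ∈ range M, z ^ j = 0 := by
    have := geom_sum_eq hz M
    rw [this, h1]
    simp
  rw [geom_deriv_aux, h1, hg]
  ring

lemma orth_Icc (M : ℕ) (hM : 0 < M) (t : ℤ) :
    ∑ k ∈ Icc 1 (M - 1), zt M ^ (t * k) = (if (M : ℤ) ∣ t then (M : ℂ) else 0) - 1 := by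
  have hs : range M = insert 0 (Icc 1 (M - 1)) := by
    ext x
    simp only [Finset.mem_range, Finset.mem_insert, Finset.mem_Icc]
    omega
  have := orth M hM t
  rw [hs, Finset.sum_insert (by simp)] at this
  simp only [Nat.cast_zero, mul_zero, zpow_zero] at this
  linear_combination this

lemma not_dvd_of_Icc (M : ℕ) (k : ℕ) (hk : k ∈ Icc 1 (M - 1)) : ¬ (M : ℤ) ∣ (k : ℤ) := by
  simp only [Finset.mem_Icc] at hk
  intro h
  have h2 : M ∣ k := Int.ofNat_dvd.mp h
  have := Nat.le_of_dvd (by omega) h2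
  omega

lemma prod_eq (M : ℕ) (hM : 2 ≤ M) (k : ℕ) (hk : k ∈ Icc 1 (M - 1)) :
    (∑ j ∈ range M, (j : ℂ) * zt M ^ ((k : ℤ) * j)) *
      (∑ l ∈ range M, (l : ℂ) * zt M ^ (-(k : ℤ) * l))
      = (M : ℂ) ^ 2 * ((1 - zt M ^ (k : ℤ)) * (1 - zt M ^ (-(k : ℤ))))⁻¹ := by
  have hM0 : 0 < M := by omega
  have hMne : (M : ℂ) ≠ 0 := by exact_mod_cast hM0.ne'
  have hw1 : zt M ^ (k : ℤ) ≠ 1 := fun hc => not_dvd_of_Icc M k hk ((zt_pow_eq_one_iff M hM0 _).mp hc)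
  have hu1 : zt M ^ (-(k : ℤ)) ≠ 1 := by
    intro hc
    exact not_dvd_of_Icc M k hk (Int.dvd_neg.mp ((zt_pow_eq_one_iff M hM0 _).mp hc))
  have hA : (zt M ^ (k : ℤ) - 1) * ∑ j ∈ range M, (j : ℂ) * (zt M ^ (k : ℤ)) ^ j = M :=
    geom_deriv _ M (zt_pow_M M hM0 _) hw1
  have hB : (zt M ^ (-(k : ℤ)) - 1) * ∑ l ∈ range M, (l : ℂ) * (zt M ^ (-(k : ℤ))) ^ l = M :=
    geom_deriv _ M (zt_pow_M M hM0 _) hu1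
  have hrw : ∀ j : ℕ, (zt M ^ (k : ℤ)) ^ j = zt M ^ ((k : ℤ) * j) := by
    intro j; rw [← zpow_natCast, ← zpow_mul]
  have hrw' : ∀ l : ℕ, (zt M ^ (-(k : ℤ))) ^ l = zt M ^ (-(k : ℤ) * l) := by
    intro l; rw [← zpow_natCast, ← zpow_mul]
  simp only [hrw] at hA
  simp only [hrw'] at hB
  have hwne : (1 - zt M ^ (k : ℤ)) ≠ 0 := fun hc => hw1 (by linear_combination -hc)
  have hune : (1 - zt M ^ (-(k : ℤ))) ≠ 0 := fun hc => hu1 (by linear_combination -hc)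
  rw [eq_comm, mul_inv_eq_iff_eq_mul₀ (mul_ne_zero hwne hune)]
  linear_combination (-((zt M ^ (-(k : ℤ)) - 1) * ∑ l ∈ range M, (l : ℂ) * zt M ^ (-(k : ℤ) * l))) * hA - (M : ℂ) * hB

lemma dvd_iff_eq (M : ℕ) (j l : ℕ) (hj : j < M) (hl : l < M) :
    (M : ℤ) ∣ ((j : ℤ) - l) ↔ j = l := by
  constructor
  · intro h
    have h0 : ((j : ℤ) - l) = 0 := Int.eq_zero_of_abs_lt_dvd h (by
      rw [abs_lt]; constructor <;> [push_cast; push_cast] <;> omega)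
    omega
  · rintro rfl; simp

lemma double_sum (M : ℕ) (hM : 2 ≤ M) :
    ∑ k ∈ Icc 1 (M - 1),
        (∑ j ∈ range M, (j : ℂ) * zt M ^ ((k : ℤ) * j)) *
          (∑ l ∈ range M, (l : ℂ) * zt M ^ (-(k : ℤ) * l))
      = (M : ℂ) * (∑ j ∈ range M, (j : ℂ) ^ 2) - (∑ j ∈ range M, (j : ℂ)) ^ 2 := by
  have hM0 : 0 < M := by omega
  have hz0 : zt M ≠ 0 := Complex.exp_ne_zero _
  have step1 : ∀ k ∈ Icc 1 (M - 1),
      (∑ j ∈ range M, (j : ℂ) * zt M ^ ((k : ℤ) * j)) *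
        (∑ l ∈ range M, (l : ℂ) * zt M ^ (-(k : ℤ) * l))
      = ∑ j ∈ range M, ∑ l ∈ range M, ((j : ℂ) * l) * zt M ^ (((j : ℤ) - l) * k) := by
    intro k _
    rw [Finset.sum_mul_sum]
    refine Finset.sum_congr rfl fun j _ => Finset.sum_congr rfl fun l _ => ?_
    have he : zt M ^ ((k : ℤ) * j) * zt M ^ (-(k : ℤ) * l) = zt M ^ (((j : ℤ) - l) * k) := by
      rw [← zpow_add₀ hz0]; congr 1; ring
    calc ((j : ℂ) * zt M ^ ((k : ℤ) * j)) * ((l : ℂ) * zt M ^ (-(k : ℤ) * l))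
        = ((j : ℂ) * l) * (zt M ^ ((k : ℤ) * j) * zt M ^ (-(k : ℤ) * l)) := by ring
      _ = ((j : ℂ) * l) * zt M ^ (((j : ℤ) - l) * k) := by rw [he]
  rw [Finset.sum_congr rfl step1, Finset.sum_comm]
  have step2 : ∀ j ∈ range M,
      ∑ k ∈ Icc 1 (M - 1), ∑ l ∈ range M, ((j : ℂ) * l) * zt M ^ (((j : ℤ) - l) * k)
      = ∑ l ∈ range M, ((j : ℂ) * l) * ((if j = l then (M : ℂ) else 0) - 1) := by
    intro j hj
    rw [Finset.sum_comm]
    refine Finset.sum_congr rfl fun l hl => ?_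
    rw [← Finset.mul_sum, orth_Icc M hM0]
    simp only [dvd_iff_eq M j l (Finset.mem_range.mp hj) (Finset.mem_range.mp hl)]
  rw [Finset.sum_congr rfl step2]
  have step3 : ∀ j ∈ range M,
      ∑ l ∈ range M, ((j : ℂ) * l) * ((if j = l then (M : ℂ) else 0) - 1)
      = (j : ℂ) ^ 2 * M - (j : ℂ) * ∑ l ∈ range M, (l : ℂ) := by
    intro j hj
    have : ∀ l ∈ range M, ((j : ℂ) * l) * ((if j = l then (M : ℂ) else 0) - 1)
        = (if j = l then (j : ℂ) * l * M else 0) - (j : ℂ) * l := by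
      intro l _
      by_cases h : j = l <;> simp [h] <;> ring
    rw [Finset.sum_congr rfl this, Finset.sum_sub_distrib, Finset.sum_ite_eq, if_pos hj]
    rw [← Finset.mul_sum]
    ring
  rw [Finset.sum_congr rfl step3, Finset.sum_sub_distrib, ← Finset.sum_mul, Finset.mul_sum]
  congr 1
  · rw [Finset.sum_mul]
    refine Finset.sum_congr rfl fun j _ => by ring
  · rw [← Finset.sum_mul, sq]

lemma sum_id_c (M : ℕ) : (∑ j ∈ range M, (j : ℂ)) * 2 = (M : ℂ) * ((M : ℂ) - 1) := by
  induction M with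
  | zero => simp
  | succ m ih => rw [Finset.sum_range_succ]; push_cast; ring_nf; ring_nf at ih; linear_combination ih

lemma sum_sq_c (M : ℕ) : (∑ j ∈ range M, (j : ℂ) ^ 2) * 6
    = (M : ℂ) * ((M : ℂ) - 1) * (2 * (M : ℂ) - 1) := by
  induction M with
  | zero => simp
  | succ m ih => rw [Finset.sum_range_succ]; push_cast; ring_nf; ring_nf at ih; linear_combination ih

lemma prod_real (M : ℕ) (hM : 2 ≤ M) (k : ℕ) :
    (1 - zt M ^ (k : ℤ)) * (1 - zt M ^ (-(k : ℤ)))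
      = ((4 * Real.sin (Real.pi * k / M) ^ 2 : ℝ) : ℂ) := by
  have hM' : (M : ℝ) ≠ 0 := by positivity
  set θ : ℝ := 2 * Real.pi * k / M with hθ
  have h1 : zt M ^ (k : ℤ) = Complex.exp ((θ : ℂ) * Complex.I) := by
    rw [zt_zpow]; congr 1; push_cast [hθ]; field_simp
  have h2 : zt M ^ (-(k : ℤ)) = Complex.exp ((-θ : ℂ) * Complex.I) := by
    rw [zt_zpow]; congr 1; push_cast [hθ]; field_simp
  rw [h1, h2, Complex.exp_mul_I, Complex.exp_mul_I, Complex.cos_neg, Complex.sin_neg]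
  have hpy : Complex.sin (θ : ℂ) ^ 2 + Complex.cos (θ : ℂ) ^ 2 = 1 := Complex.sin_sq_add_cos_sq _
  have hcos : Complex.cos (θ : ℂ) = ((Real.cos θ : ℝ) : ℂ) := (Complex.ofReal_cos θ).symm
  have hhalf : Real.cos θ = 1 - 2 * Real.sin (Real.pi * k / M) ^ 2 := by
    have hd : θ = 2 * (Real.pi * k / M) := by rw [hθ]; ring
    rw [hd, Real.cos_two_mul]
    have := Real.sin_sq_add_cos_sq (Real.pi * k / M)
    linarith
  push_cast [hhalf] at hcos ⊢
  linear_combination hpy + (-2 : ℂ) * hcos + (-(Complex.sin ((θ : ℝ) : ℂ)) ^ 2) * Complex.I_sq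

lemma sin_ne_zero_of_Icc (M : ℕ) (hM : 2 ≤ M) (k : ℕ) (hk : k ∈ Icc 1 (M - 1)) :
    Real.sin (Real.pi * k / M) ≠ 0 := by
  simp only [Finset.mem_Icc] at hk
  have h1 : 0 < Real.pi * k / M := by
    have : (0:ℝ) < k := by exact_mod_cast (by omega : 0 < k)
    have : (0:ℝ) < M := by positivity
    positivity
  have h2 : Real.pi * k / M < Real.pi := by
    rw [div_lt_iff₀ (by positivity : (0:ℝ) < M)]
    have hkM : (k : ℝ) < M := by exact_mod_cast (by omega : k < M)
    nlinarith [Real.pi_pos]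
  exact (Real.sin_pos_of_pos_of_lt_pi h1 h2).ne'

lemma S_val (M : ℕ) (hM : 2 ≤ M) :
    ∑ k ∈ Icc 1 (M - 1), (Real.sin (Real.pi * k / M) ^ 2)⁻¹ = ((M : ℝ) ^ 2 - 1) / 3 := by
  have hM0 : 0 < M := by omega
  have hMne : (M : ℂ) ≠ 0 := by exact_mod_cast hM0.ne'
  have key : (M : ℂ) ^ 2 * ∑ k ∈ Icc 1 (M - 1), ((1 - zt M ^ (k : ℤ)) * (1 - zt M ^ (-(k : ℤ))))⁻¹
      = (M : ℂ) * (∑ j ∈ range M, (j : ℂ) ^ 2) - (∑ j ∈ range M, (j : ℂ)) ^ 2 := by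
    rw [Finset.mul_sum, ← double_sum M hM]
    exact Finset.sum_congr rfl fun k hk => (prod_eq M hM k hk).symm
  have hrw : ∑ k ∈ Icc 1 (M - 1), ((1 - zt M ^ (k : ℤ)) * (1 - zt M ^ (-(k : ℤ))))⁻¹
      = (((∑ k ∈ Icc 1 (M - 1), (Real.sin (Real.pi * k / M) ^ 2)⁻¹) / 4 : ℝ) : ℂ) := by
    have hterm : ∀ k ∈ Icc 1 (M - 1),
        ((1 - zt M ^ (k : ℤ)) * (1 - zt M ^ (-(k : ℤ))))⁻¹
          = (((Real.sin (Real.pi * k / M) ^ 2)⁻¹ / 4 : ℝ) : ℂ) := by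
      intro k hk
      have hs := sin_ne_zero_of_Icc M hM k hk
      rw [prod_real M hM k, ← Complex.ofReal_inv]
      congr 1
      field_simp
    rw [Finset.sum_congr rfl hterm, ← Complex.ofReal_sum]
    congr 1
    rw [Finset.sum_div]
  rw [hrw] at key
  have h2 : ((M : ℂ) * (∑ j ∈ range M, (j : ℂ) ^ 2) - (∑ j ∈ range M, (j : ℂ)) ^ 2) * 12
      = (M : ℂ) ^ 2 * ((M : ℂ) ^ 2 - 1) := by
    have ha := sum_sq_c M
    have hb := sum_id_c M
    linear_combination 2 * (M:ℂ) * ha - 6 * ((∑ j ∈ range M, (j : ℂ)) + (M:ℂ)*((M:ℂ)-1)/2) * hb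
  have key2 : ((M : ℝ) ^ 2 * ((∑ k ∈ Icc 1 (M - 1), (Real.sin (Real.pi * k / M) ^ 2)⁻¹) / 4) * 12 : ℂ)
      = ((M : ℝ) ^ 2 * (((M : ℝ) ^ 2 - 1) / 12) * 12 : ℂ) := by
    push_cast
    push_cast at key
    linear_combination 12 * key + h2
  have key3 : (M : ℝ) ^ 2 * ((∑ k ∈ Icc 1 (M - 1), (Real.sin (Real.pi * k / M) ^ 2)⁻¹) / 4) * 12
      = (M : ℝ) ^ 2 * (((M : ℝ) ^ 2 - 1) / 12) * 12 := by exact_mod_cast key2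
  have hMR : (M : ℝ) ≠ 0 := by positivity
  have hc : (M : ℝ) ^ 2 ≠ 0 := pow_ne_zero 2 hMR
  have h4 : (M : ℝ) ^ 2 * ((∑ k ∈ Icc 1 (M - 1), (Real.sin (Real.pi * k / M) ^ 2)⁻¹) * 3)
      = (M : ℝ) ^ 2 * ((M : ℝ) ^ 2 - 1) := by linear_combination key3
  have h5 := mul_left_cancel₀ hc h4
  linarith

lemma cos_orth (M : ℕ) (hM : 2 ≤ M) (n : ℕ) (hn : ¬ (M : ℤ) ∣ (n : ℤ)) :
    ∑ k ∈ Icc 1 (M - 1), Real.cos (2 * Real.pi * n * k / M) = -1 := by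
  have hM0 : 0 < M := by omega
  have h := orth_Icc M hM0 (n : ℤ)
  rw [if_neg hn] at h
  have hterm : ∀ k ∈ Icc 1 (M - 1),
      zt M ^ ((n : ℤ) * k) = Complex.exp (((2 * Real.pi * n * k / M : ℝ) : ℂ) * Complex.I) := by
    intro k _
    rw [zt_zpow]
    congr 1
    push_cast
    ring
  rw [Finset.sum_congr rfl hterm] at h
  have h2 := congrArg Complex.re h
  rw [Complex.re_sum] at h2
  simp only [Complex.exp_ofReal_mul_I_re] at h2
  simpa using h2

lemma cos_div_sin_base (M : ℕ) (hM : 2 ≤ M) (k : ℕ) (hk : k ∈ Icc 1 (M - 1)) :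
    Real.cos (2 * Real.pi * 1 * k / M) / Real.sin (Real.pi * k / M) ^ 2
      = (Real.sin (Real.pi * k / M) ^ 2)⁻¹ - 2 := by
  have hs := sin_ne_zero_of_Icc M hM k hk
  have harg : 2 * Real.pi * 1 * (k : ℝ) / M = 2 * (Real.pi * k / M) := by ring
  rw [harg, Real.cos_two_mul]
  have hpy := Real.sin_sq_add_cos_sq (Real.pi * k / M)
  have hs2 : Real.sin (Real.pi * k / M) ^ 2 ≠ 0 := pow_ne_zero 2 hs
  field_simp
  linarith

lemma C_rec (M : ℕ) (hM : 2 ≤ M) (m : ℕ) (hm : m + 2 ≤ M) :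
    ∑ k ∈ Icc 1 (M - 1), Real.cos (2 * Real.pi * (m + 2) * k / M) / Real.sin (Real.pi * k / M) ^ 2
      = 2 * (∑ k ∈ Icc 1 (M - 1), Real.cos (2 * Real.pi * (m + 1) * k / M) / Real.sin (Real.pi * k / M) ^ 2)
        - (∑ k ∈ Icc 1 (M - 1), Real.cos (2 * Real.pi * m * k / M) / Real.sin (Real.pi * k / M) ^ 2)
        + 4 := by
  have hdvd : ¬ (M : ℤ) ∣ ((m + 1 : ℕ) : ℤ) := by
    intro h
    have h2 : M ∣ (m + 1) := Int.ofNat_dvd.mp h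
    have := Nat.le_of_dvd (by omega) h2
    omega
  have hco := cos_orth M hM (m + 1) hdvd
  have hterm : ∀ k ∈ Icc 1 (M - 1),
      Real.cos (2 * Real.pi * (m + 2) * k / M) / Real.sin (Real.pi * k / M) ^ 2
        = 2 * (Real.cos (2 * Real.pi * (m + 1) * k / M) / Real.sin (Real.pi * k / M) ^ 2)
          - Real.cos (2 * Real.pi * m * k / M) / Real.sin (Real.pi * k / M) ^ 2
          - 4 * Real.cos (2 * Real.pi * (m + 1) * k / M) := by
    intro k hk
    have hs := sin_ne_zero_of_Icc M hM k hk
    have hs2 : Real.sin (Real.pi * k / M) ^ 2 ≠ 0 := pow_ne_zero 2 hs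
    set a : ℝ := 2 * Real.pi * (m + 1) * k / M with ha
    set x : ℝ := 2 * Real.pi * k / M with hx
    have h1 : 2 * Real.pi * ((m : ℝ) + 2) * k / M = a + x := by rw [ha, hx]; ring
    have h2 : 2 * Real.pi * (m : ℝ) * k / M = a - x := by rw [ha, hx]; ring
    have hcos2 : Real.cos x = 1 - 2 * Real.sin (Real.pi * k / M) ^ 2 := by
      have hd : x = 2 * (Real.pi * k / M) := by rw [hx]; ring
      rw [hd, Real.cos_two_mul]
      have := Real.sin_sq_add_cos_sq (Real.pi * k / M)
      linarith
    have key : Real.cos (a + x) = 2 * Real.cos a * Real.cos x - Real.cos (a - x) := by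
      linear_combination Real.cos_add a x + Real.cos_sub a x
    push_cast
    push_cast at h1 h2
    rw [h1, h2, key, hcos2]
    field_simp
    ring
  rw [Finset.sum_congr rfl hterm]
  rw [Finset.sum_sub_distrib, Finset.sum_sub_distrib, ← Finset.mul_sum, ← Finset.mul_sum]
  push_cast at hco
  rw [hco]
  ring

lemma C_val (M : ℕ) (hM : 2 ≤ M) : ∀ n : ℕ, n ≤ M →
    ∑ k ∈ Icc 1 (M - 1), Real.cos (2 * Real.pi * n * k / M) / Real.sin (Real.pi * k / M) ^ 2
      = ((M : ℝ) ^ 2 - 1) / 3 - 2 * n * ((M : ℝ) - n) := by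
  intro n
  induction n using Nat.strong_induction_on with
  | _ n ih =>
    match n with
    | 0 =>
      intro _
      have : ∀ k ∈ Icc 1 (M - 1),
          Real.cos (2 * Real.pi * (0 : ℕ) * k / M) / Real.sin (Real.pi * k / M) ^ 2
            = (Real.sin (Real.pi * k / M) ^ 2)⁻¹ := by
        intro k _
        norm_num
      rw [Finset.sum_congr rfl this, S_val M hM]
      push_cast
      ring
    | 1 =>
      intro _
      push_cast
      rw [Finset.sum_congr rfl (fun k hk => cos_div_sin_base M hM k hk)]
      rw [Finset.sum_sub_distrib, S_val M hM]
      rw [Finset.sum_const, Nat.card_Icc]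
      have : (M - 1 + 1 - 1 : ℕ) = M - 1 := by omega
      rw [this]
      have hMc : ((M - 1 : ℕ) : ℝ) = (M : ℝ) - 1 := by
        push_cast [Nat.cast_sub (by omega : 1 ≤ M)]; ring
      rw [nsmul_eq_mul, hMc]
      push_cast
      ring
    | (m + 2) =>
      intro hle
      have h1 := ih (m + 1) (by omega) (by omega)
      have h0 := ih m (by omega) (by omega)
      push_cast
      push_cast at h1 h0
      rw [C_rec M hM m hle, h1, h0]
      ring

lemma pairing (m : ℕ) (hm : 1 ≤ m) (f : ℕ → ℝ)
    (hsymm : ∀ k ∈ Icc 1 (2 * m - 1), f (2 * m - k) = f k) :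
    ∑ k ∈ Icc 1 (2 * m - 1), f k = 2 * (∑ k ∈ Icc 1 (m - 1), f k) + f m := by
  have hsplit : Icc 1 (2 * m - 1) = Icc 1 m ∪ Icc (m + 1) (2 * m - 1) := by
    ext x; simp only [Finset.mem_Icc, Finset.mem_union]; omega
  have hdisj : Disjoint (Icc 1 m) (Icc (m + 1) (2 * m - 1)) := by
    simp only [Finset.disjoint_left, Finset.mem_Icc]
    intro a ha hb; omega
  have htop : ∑ k ∈ Icc 1 m, f k = ∑ k ∈ Icc 1 (m - 1), f k + f m := by
    have h := Finset.sum_Icc_succ_top (a := 1) (b := m - 1) (by omega) f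
    rw [show m - 1 + 1 = m from by omega] at h
    exact h
  have hrefl : ∑ k ∈ Icc (m + 1) (2 * m - 1), f k = ∑ k ∈ Icc 1 (m - 1), f k := by
    refine Finset.sum_nbij' (i := fun k => 2 * m - k) (j := fun k => 2 * m - k) ?_ ?_ ?_ ?_ ?_
    · intro a ha; simp only [Finset.mem_Icc] at *; omega
    · intro a ha; simp only [Finset.mem_Icc] at *; omega
    · intro a ha; simp only [Finset.mem_Icc] at *; omega
    · intro a ha; simp only [Finset.mem_Icc] at *; omega
    · intro a ha
      have haM : a ∈ Icc 1 (2 * m - 1) := by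
        simp only [Finset.mem_Icc] at *; omega
      exact (hsymm a haM).symm
  rw [hsplit, Finset.sum_union hdisj, htop, hrefl]
  ring

theorem sum_identity_even_relation (N : ℕ) (hN4 : 4 ∣ N) (hN : 4 ≤ N)
    (n : ℕ) (hn : n ≤ N / 2) :
    ∑ s ∈ Finset.Icc 1 (N / 4 - 1),
        (hCoef N n + Real.cos (4 * Real.pi * n * s / N)) /
          Real.sin (2 * Real.pi * s / N) ^ 2
      + (1 / 2) * (hCoef N n + Real.cos (Real.pi * n)) = 0 := by
  obtain ⟨m, rfl⟩ : ∃ m, N = 4 * m := ⟨N / 4, by omega⟩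
  have hm : 1 ≤ m := by omega
  have hM : 2 ≤ 2 * m := by omega
  have e1 : 4 * m / 4 = m := by omega
  have e2 : 4 * m / 2 = 2 * m := by omega
  rw [e1]
  rw [e2] at hn
  have hmR : (0 : ℝ) < (m : ℝ) := by exact_mod_cast hm
  have hmne : (m : ℝ) ≠ 0 := hmR.ne'
  set h : ℝ := hCoef (4 * m) n with hh
  set f : ℕ → ℝ := fun k =>
    (h + Real.cos (2 * Real.pi * n * k / (2 * m : ℕ))) / Real.sin (Real.pi * k / (2 * m : ℕ)) ^ 2
    with hf
  -- rewrite the goal sum in terms of f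
  have hgoal_sum : ∀ s ∈ Icc 1 (m - 1),
      (h + Real.cos (4 * Real.pi * n * s / ((4 * m : ℕ) : ℝ))) /
          Real.sin (2 * Real.pi * s / ((4 * m : ℕ) : ℝ)) ^ 2 = f s := by
    intro s _
    have a1 : 4 * Real.pi * n * s / ((4 * m : ℕ) : ℝ) = 2 * Real.pi * n * s / ((2 * m : ℕ) : ℝ) := by
      push_cast; field_simp
    have a2 : 2 * Real.pi * s / ((4 * m : ℕ) : ℝ) = Real.pi * s / ((2 * m : ℕ) : ℝ) := by
      push_cast; field_simp; ring
    rw [hf, a1, a2]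
  -- symmetry of f
  have hsymm : ∀ k ∈ Icc 1 (2 * m - 1), f (2 * m - k) = f k := by
    intro k hk
    simp only [Finset.mem_Icc] at hk
    have hc : ((2 * m - k : ℕ) : ℝ) = 2 * (m : ℝ) - k := by
      push_cast [Nat.cast_sub (by omega : k ≤ 2 * m)]; ring
    simp only [hf, hc]
    have a1 : 2 * Real.pi * n * (2 * (m : ℝ) - k) / ((2 * m : ℕ) : ℝ)
        = (n : ℝ) * (2 * Real.pi) - 2 * Real.pi * n * k / ((2 * m : ℕ) : ℝ) := by
      push_cast; field_simp
    have a2 : Real.pi * (2 * (m : ℝ) - k) / ((2 * m : ℕ) : ℝ)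
        = Real.pi - Real.pi * k / ((2 * m : ℕ) : ℝ) := by
      push_cast; field_simp
    rw [a1, a2, Real.sin_pi_sub, Real.cos_nat_mul_two_pi_sub]
  -- value at m
  have hfm : f m = h + Real.cos (Real.pi * n) := by
    have a1 : 2 * Real.pi * n * (m : ℝ) / ((2 * m : ℕ) : ℝ) = Real.pi * n := by
      push_cast; field_simp
    have a2 : Real.pi * (m : ℝ) / ((2 * m : ℕ) : ℝ) = Real.pi / 2 := by
      push_cast; field_simp
    simp only [hf, a1, a2, Real.sin_pi_div_two]
    norm_num
  -- total sum
  have hCtot : ∑ k ∈ Icc 1 (2 * m - 1), f k = 0 := by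
    have hsplit : ∀ k ∈ Icc 1 (2 * m - 1), f k
        = h * (Real.sin (Real.pi * k / (2 * m : ℕ)) ^ 2)⁻¹
          + Real.cos (2 * Real.pi * n * k / (2 * m : ℕ)) / Real.sin (Real.pi * k / (2 * m : ℕ)) ^ 2 := by
      intro k _
      simp only [hf]
      rw [add_div, div_eq_mul_inv]
    rw [Finset.sum_congr rfl hsplit, Finset.sum_add_distrib, ← Finset.mul_sum]
    rw [S_val (2 * m) hM, C_val (2 * m) hM n hn]
    rw [hh, hCoef]
    have h4 : ((4 * m : ℕ) : ℝ) = 4 * m := by push_cast; ring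
    rw [h4]
    have hm1 : (1 : ℝ) ≤ (m : ℝ) := by exact_mod_cast hm
    have hden : (4 * (m : ℝ)) ^ 2 - 4 ≠ 0 := by nlinarith [hm1]
    have hden' : 4 * (m : ℝ) ^ 2 - 1 ≠ 0 := by nlinarith [hm1]
    push_cast
    field_simp
    ring
  -- finish
  rw [Finset.sum_congr rfl hgoal_sum]
  have hp := pairing m hm f hsymm
  rw [hCtot, hfm] at hp
  linarith
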